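/- Every distribution with consistently varying tail is infinite-order long-tailed: if a nonnegative random variable X satisfies lim_{v↓1} liminf_{x→∞} P(X > vx)/P(X > x) = 1 (and P(X > x) > 0 for all x ≥ 0), then for every 0 < θ ≤ 1 the random variable X^θ is long-tailed, i.e., 𝓒 ⊆ 𝓛^∞. -/
import Mathlib


open MeasureTheory Filter Set ProbabilityTheory Real

/-- The tail probability `P(X > x)` as a real number. -/
noncomputable def tailP {Ω : Type*} [MeasurableSpace Ω] (μ : Measure Ω) (X : Ω → ℝ) (x : ℝ) : ℝ :=
  (μ {ω | x < X ω}).toReal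

/-- A nonnegative random variable `X` is long-tailed if `P(X > x) > 0` for all `x ≥ 0` and
`P(X > x + y) / P(X > x) → 1` as `x → ∞` for all `y > 0`. -/
def LongTailed {Ω : Type*} [MeasurableSpace Ω] (μ : Measure Ω) (X : Ω → ℝ) : Prop :=
  (∀ x ≥ 0, 0 < tailP μ X x) ∧
  ∀ y > 0, Tendsto (fun x => tailP μ X (x + y) / tailP μ X x) atTop (nhds 1)

lemma tailP_anti {Ω : Type*} [MeasurableSpace Ω] (μ : Measure Ω) [IsProbabilityMeasure μ]
    (X : Ω → ℝ) : Antitone (tailP μ X) := by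
  intro a b hab
  refine ENNReal.toReal_mono (measure_ne_top μ _) (measure_mono ?_)
  exact fun ω h => lt_of_le_of_lt hab h

lemma tailP_rpow {Ω : Type*} [MeasurableSpace Ω] (μ : Measure Ω)
    (X : Ω → ℝ) (hX : ∀ ω, 0 ≤ X ω) {θ : ℝ} (hθ : 0 < θ) {x : ℝ} (hx : 0 ≤ x) :
    tailP μ (fun ω => X ω ^ θ) x = tailP μ X (x ^ (1/θ)) := by
  unfold tailP
  have hset : {ω | x < X ω ^ θ} = {ω | x ^ (1/θ) < X ω} := by
    ext ω
    simp only [Set.mem_setOf_eq]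
    have hxx : x = (x ^ (1/θ)) ^ θ := by rw [one_div, Real.rpow_inv_rpow hx hθ.ne']
    rw [hxx]
    rw [Real.rpow_lt_rpow_iff (Real.rpow_nonneg hx _) (hX ω) hθ]
    rw [one_div, Real.rpow_inv_rpow hx hθ.ne']
  rw [hset]

/-- Every distribution with a consistently varying tail is infinite-order long-tailed:
if `lim_{v↓1} liminf_{x→∞} P(X > vx)/P(X > x) = 1`, then `X^θ` is long-tailed for all
`0 < θ ≤ 1`, i.e. `𝓒 ⊆ 𝓛^∞`. -/
theorem stmt4 {Ω : Type*} [MeasurableSpace Ω] (μ : Measure Ω) [IsProbabilityMeasure μ]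
    (X : Ω → ℝ) (hX : ∀ ω, 0 ≤ X ω)
    (hpos : ∀ x ≥ 0, 0 < tailP μ X x)
    (hC : Tendsto (fun v => Filter.liminf (fun x => tailP μ X (v * x) / tailP μ X x) atTop)
      (nhdsWithin 1 (Set.Ioi 1)) (nhds 1)) :
    ∀ θ : ℝ, 0 < θ → θ ≤ 1 → LongTailed μ (fun ω => X ω ^ θ) := by
  intro θ hθ hθ1
  have hposθ : ∀ x ≥ 0, 0 < tailP μ (fun ω => X ω ^ θ) x := by
    intro x hx
    rw [tailP_rpow μ X hX hθ hx]
    exact hpos _ (Real.rpow_nonneg hx _)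
  refine ⟨hposθ, fun y hy => ?_⟩
  -- ratio is ≤ 1 and ≥ 0 for x ≥ 0
  have hub : ∀ᶠ x in atTop, tailP μ (fun ω => X ω ^ θ) (x + y) / tailP μ (fun ω => X ω ^ θ) x ≤ 1 := by
    filter_upwards [eventually_ge_atTop (0 : ℝ)] with x hx
    have h1 := tailP_anti μ (fun ω => X ω ^ θ) (le_add_of_nonneg_right hy.le : x ≤ x + y)
    exact div_le_one_of_le₀ h1 (hposθ x hx).le
  rw [tendsto_order]
  constructor
  · intro a ha
    -- find v > 1 with liminf > a
    have hball : ∀ᶠ v in nhdsWithin (1:ℝ) (Set.Ioi 1),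
        a < Filter.liminf (fun x => tailP μ X (v * x) / tailP μ X x) atTop :=
      hC.eventually (eventually_gt_nhds ha)
    obtain ⟨v, hav, hv⟩ := (hball.and self_mem_nhdsWithin).exists
    have hv1 : (1:ℝ) < v := hv
    have hv0 : (0:ℝ) < v := lt_trans one_pos hv1
    -- eventually in t, ratio at (v t, t) > a
    have hbdd : (atTop : Filter ℝ).IsBoundedUnder (· ≥ ·)
        (fun x => tailP μ X (v * x) / tailP μ X x) := by
      exact Filter.isBoundedUnder_of ⟨0, fun x =>
        div_nonneg ENNReal.toReal_nonneg ENNReal.toReal_nonneg⟩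
    have hev : ∀ᶠ t in (atTop : Filter ℝ), a < tailP μ X (v * t) / tailP μ X t :=
      eventually_lt_of_lt_liminf hav hbdd
    -- compose with t = x ^ (1/θ)
    have hto : Tendsto (fun x : ℝ => x ^ (1/θ)) atTop atTop :=
      tendsto_rpow_atTop (by positivity)
    have hev2 : ∀ᶠ x in (atTop : Filter ℝ), a < tailP μ X (v * x ^ (1/θ)) / tailP μ X (x ^ (1/θ)) :=
      hto.eventually hev
    have hvθ : (1:ℝ) < v ^ θ := by
      rw [Real.one_lt_rpow_iff_of_pos hv0]
      exact Or.inl ⟨hv1, hθ⟩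
    filter_upwards [hev2, eventually_ge_atTop (max 0 (y / (v ^ θ - 1)))] with x hx1 hx2
    have hx0 : (0:ℝ) ≤ x := le_trans (le_max_left _ _) hx2
    have hxy0 : (0:ℝ) ≤ x + y := by linarith [hy.le]
    -- key: (x+y)^(1/θ) ≤ v * x^(1/θ)
    have hkey : (x + y) ^ (1/θ) ≤ v * x ^ (1/θ) := by
      have h1 : x + y ≤ v ^ θ * x := by
        have : y / (v ^ θ - 1) ≤ x := le_trans (le_max_right _ _) hx2
        have h2 : y ≤ (v ^ θ - 1) * x := by
          rw [div_le_iff₀ (by linarith)] at this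
          linarith [this]
        nlinarith
      calc (x + y) ^ (1/θ) ≤ (v ^ θ * x) ^ (1/θ) :=
            Real.rpow_le_rpow hxy0 h1 (by positivity)
        _ = v * x ^ (1/θ) := by
            rw [Real.mul_rpow (by positivity) hx0, ← Real.rpow_mul hv0.le,
              mul_one_div, div_self hθ.ne', Real.rpow_one]
    have hmono := tailP_anti μ X hkey
    rw [tailP_rpow μ X hX hθ hxy0, tailP_rpow μ X hX hθ hx0]
    refine lt_of_lt_of_le hx1 ((div_le_div_iff_of_pos_right (hpos _ (Real.rpow_nonneg hx0 _))).mpr hmono)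
  · intro a ha
    filter_upwards [hub] with x hx
    exact lt_of_le_of_lt hx ha
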